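/- Let G = (V, E) be a finite simple graph and τ : V → ℕ a threshold function with τ(v) ≤ d_G(v) for every v ∈ V, and let G' and x be the multigraph and divisor of the standard construction. Then ts_G(τ) ≥ dist_rec_{G'}(x). -/

import Mathlib

variable {V : Type*} [Fintype V] [DecidableEq V]

/-- The degree of vertex `v` in the multigraph with edge-multiplicity function `m`. -/
def mgDeg (m : V → V → ℕ) (v : V) : ℕ := ∑ u, m v u

/-- The divisor obtained from `f` by firing vertex `v`. -/
def mgFire (m : V → V → ℕ) (f : V → ℤ) (v : V) : V → ℤ :=
  fun u => if u = v then f v - mgDeg m v else f u + m v u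

/-- The divisor obtained from `f` by firing the vertices of `L` in order. -/
def mgPlay (m : V → V → ℕ) (f : V → ℤ) (L : List V) : V → ℤ :=
  L.foldl (mgFire m) f

/-- `L` is a legal game from `f`: each fired vertex is active when fired. -/
def mgLegal (m : V → V → ℕ) : (V → ℤ) → List V → Prop
  | _, [] => True
  | f, v :: L => ((mgDeg m v : ℤ) ≤ f v) ∧ mgLegal m (mgFire m f v) L

/-- A divisor is stable if no vertex is active. -/
def mgStable (m : V → V → ℕ) (f : V → ℤ) : Prop := ∀ v, f v < (mgDeg m v : ℤ)

/-- A divisor is halting if some legal game from it ends at a stable divisor. -/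
def mgHalting (m : V → V → ℕ) (f : V → ℤ) : Prop :=
  ∃ L : List V, mgLegal m f L ∧ mgStable m (mgPlay m f L)

/-- A divisor is recurrent if some non-empty legal game from it leads back to it. -/
def mgRecurrent (m : V → V → ℕ) (f : V → ℤ) : Prop :=
  ∃ L : List V, L ≠ [] ∧ mgLegal m f L ∧ mgPlay m f L = f

/-- A divisor is effective if it is nonnegative everywhere. -/
def mgEffective (f : V → ℤ) : Prop := ∀ v, 0 ≤ f v

/-- The degree of a divisor. -/
def mgDegDiv (f : V → ℤ) : ℤ := ∑ v, f v

/-- Distance of a divisor from a recurrent state. -/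
noncomputable def mgDistRec (m : V → V → ℕ) (f : V → ℤ) : ℕ :=
  sInf {n : ℕ | ∃ g : V → ℤ, mgEffective g ∧ mgDegDiv g = (n : ℤ) ∧ mgRecurrent m (f + g)}

/-- Distance of a divisor from a non-halting state. -/
noncomputable def mgDistNonhalt (m : V → V → ℕ) (f : V → ℤ) : ℕ :=
  sInf {n : ℕ | ∃ g : V → ℤ, mgEffective g ∧ mgDegDiv g = (n : ℤ) ∧ ¬ mgHalting m (f + g)}

/-- A multigraph is connected if any two vertices are joined by a path of
positive-multiplicity edges. -/
def mgConnected (m : V → V → ℕ) : Prop :=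
  ∀ u v : V, Relation.ReflTransGen (fun a b => 0 < m a b) u v

/-- `f` and `g` are linearly equivalent: `f` can be transformed to `g` by firings. -/
def mgLinEquiv (m : V → V → ℕ) (f g : V → ℤ) : Prop :=
  ∃ L : List V, mgPlay m f L = g

/-- A divisor is winnable if it is linearly equivalent to an effective divisor. -/
def mgWinnable (m : V → V → ℕ) (f : V → ℤ) : Prop :=
  ∃ g : V → ℤ, mgEffective g ∧ mgLinEquiv m f g

/-- The rank of a divisor. -/
noncomputable def mgRank (m : V → V → ℕ) (f : V → ℤ) : ℤ :=
  ((sInf {n : ℕ | ∃ g : V → ℤ, mgEffective g ∧ mgDegDiv g = (n : ℤ) ∧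
    ¬ mgWinnable m (f - g)} : ℕ) : ℤ) - 1

/-- One round of the activation process: every vertex with at least `τ v`
active neighbors becomes active (and active vertices stay active). -/
def tssStep (G : SimpleGraph V) [DecidableRel G.Adj] (τ : V → ℕ) (A : Finset V) : Finset V :=
  A ∪ Finset.univ.filter (fun v => τ v ≤ (A.filter (fun u => G.Adj v u)).card)

/-- `S` is a target set: the activation process starting from `S` eventually
activates all vertices. -/
def tssIsTargetSet (G : SimpleGraph V) [DecidableRel G.Adj] (τ : V → ℕ) (S : Finset V) : Prop :=
  ∃ n : ℕ, (tssStep G τ)^[n] S = Finset.univ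

/-- Minimum cardinality of a target set. -/
noncomputable def tssMin (G : SimpleGraph V) [DecidableRel G.Adj] (τ : V → ℕ) : ℕ :=
  sInf {k : ℕ | ∃ S : Finset V, tssIsTargetSet G τ S ∧ S.card = k}

/-- Auxiliary (one-directional) edge multiplicities of the standard construction.
In the vertex type `(V ⊕ V ⊕ V) ⊕ G.Dart`, the first, second and third summands
of `V ⊕ V ⊕ V` encode `v_i`, `v_c`, `v_o` respectively, and a dart `d = (u, v)`
encodes the vertex `p_{uv}`. -/
def consAux (G : SimpleGraph V) [DecidableRel G.Adj] (N : ℕ) :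
    (V ⊕ V ⊕ V) ⊕ G.Dart → (V ⊕ V ⊕ V) ⊕ G.Dart → ℕ
  | Sum.inl (Sum.inl v), Sum.inl (Sum.inr (Sum.inl w)) => if v = w then N else 0
  | Sum.inl (Sum.inr (Sum.inl v)), Sum.inl (Sum.inr (Sum.inr w)) => if v = w then 1 else 0
  | Sum.inl (Sum.inr (Sum.inr v)), Sum.inr d => if d.toProd.1 = v then N else 0
  | Sum.inr d, Sum.inl (Sum.inl v) => if d.toProd.2 = v then 1 else 0
  | _, _ => 0

/-- Edge-multiplicity function of the multigraph `G'` of the standard construction: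
`N` parallel edges between `v_i` and `v_c`, one edge between `v_c` and `v_o`, and,
for each edge `uv` of `G`, `N` parallel edges between `u_o` and `p_{uv}` and one
edge between `p_{uv}` and `v_i`. -/
def consM (G : SimpleGraph V) [DecidableRel G.Adj] (N : ℕ)
    (a b : (V ⊕ V ⊕ V) ⊕ G.Dart) : ℕ :=
  consAux G N a b + consAux G N b a

/-- The divisor `x` of the standard construction: `x(v_i) = d_G(v) + N - τ(v)`,
`x(v_c) = 1`, `x(v_o) = N * d_G(v)`, and `x(p) = 1` for every vertex `p_{uv}`. -/
def consX (G : SimpleGraph V) [DecidableRel G.Adj] (τ : V → ℕ) (N : ℕ) :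
    (V ⊕ V ⊕ V) ⊕ G.Dart → ℤ
  | Sum.inl (Sum.inl v) => (G.degree v : ℤ) + N - τ v
  | Sum.inl (Sum.inr (Sum.inl _)) => 1
  | Sum.inl (Sum.inr (Sum.inr v)) => (N : ℤ) * G.degree v
  | Sum.inr _ => 1


/-! ### Auxiliary lemmas -/

section AuxGeneric

variable {m : V → V → ℕ}

lemma mgPlay_cons (m : V → V → ℕ) (f : V → ℤ) (a : V) (L : List V) :
    mgPlay m f (a :: L) = mgPlay m (mgFire m f a) L := rfl

lemma mgPlay_formula (hm : ∀ v, m v v = 0) (f : V → ℤ) (L : List V) (v : V) :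
    mgPlay m f L v =
      f v + (L.map (fun w => (m w v : ℤ))).sum - (L.count v) * mgDeg m v := by
  induction L generalizing f with
  | nil => simp [mgPlay]
  | cons a L ih =>
    rw [mgPlay_cons, ih]
    by_cases h : v = a
    · subst h
      simp only [mgFire, if_pos rfl, List.map_cons, List.sum_cons, List.count_cons_self, hm]
      push_cast
      ring
    · simp only [mgFire, if_neg h, List.map_cons, List.sum_cons,
        List.count_cons_of_ne (Ne.symm h)]
      ring

lemma mgLegal_of_splits (f : V → ℤ) (L : List V) (hnd : L.Nodup)
    (H : ∀ P w Q, L = P ++ w :: Q →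
      (mgDeg m w : ℤ) ≤ f w + (P.map (fun u => (m u w : ℤ))).sum) :
    mgLegal m f L := by
  induction L generalizing f with
  | nil => trivial
  | cons a L ih =>
    have ha : a ∉ L := (List.nodup_cons.mp hnd).1
    refine ⟨by simpa using H [] a L rfl, ?_⟩
    refine ih _ (List.nodup_cons.mp hnd).2 ?_
    intro P w Q hPQ
    have hw : w ≠ a := by
      rintro rfl; exact ha (by rw [hPQ]; simp)
    have h2 := H (a :: P) w Q (by rw [hPQ, List.cons_append])
    simp only [List.map_cons, List.sum_cons] at h2
    have hf : mgFire m f a w = f w + m a w := by simp [mgFire, hw]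
    rw [hf]; linarith

lemma pair_sublist_append {L1 L2 : List V} {a b : V} (ha : a ∈ L1) (hb : b ∈ L2) :
    List.Sublist [a, b] (L1 ++ L2) :=
  List.Sublist.append (List.singleton_sublist.mpr ha) (List.singleton_sublist.mpr hb)

lemma mem_prefix_of_pair_sublist {L P Q : List V} {a w : V} (hnd : L.Nodup)
    (hL : L = P ++ w :: Q) (hs : List.Sublist [a, w] L) (haw : a ≠ w) : a ∈ P := by
  subst hL
  have hwP : w ∉ P := by
    intro hc
    rw [List.nodup_append] at hnd
    exact hnd.2.2 w hc w List.mem_cons_self rfl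
  have hwQ : w ∉ Q := by
    rw [List.nodup_append] at hnd
    exact (List.nodup_cons.mp hnd.2.1).1
  rw [List.sublist_append_iff] at hs
  obtain ⟨l₁, l₂, he, h₁, h₂⟩ := hs
  match l₁, he, h₁ with
  | [], he, h₁ =>
    rw [List.nil_append] at he
    rw [← he] at h₂
    exfalso
    cases h₂ with
    | cons _ h => exact hwQ (h.mem (by simp))
    | cons_cons h => exact haw rfl
  | [x], he, h₁ =>
    have h1 : a = x := by injection he
    rw [h1]
    exact List.singleton_sublist.mp h₁
  | x :: y :: l, he, h₁ =>
    exfalso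
    have h2 : w :: [] = y :: (l ++ l₂) := by injection he
    have h3 : w = y := by injection h2
    exact hwP (h₁.mem (by rw [h3]; simp))

lemma sum_finset_le_list_sum (P : List V) (hnd : P.Nodup) (g : V → ℤ)
    (hg : ∀ v, 0 ≤ g v) (T : Finset V) (hT : ∀ t ∈ T, t ∈ P) :
    ∑ t ∈ T, g t ≤ (P.map g).sum := by
  rw [← List.sum_toFinset _ hnd]
  apply Finset.sum_le_sum_of_subset_of_nonneg
  · intro t ht; exact List.mem_toFinset.mpr (hT t ht)
  · intro i _ _; exact hg i

end AuxGeneric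


section AuxTss

variable (G : SimpleGraph V) [DecidableRel G.Adj] (τ : V → ℕ)

lemma tssStep_subset (A : Finset V) : A ⊆ tssStep G τ A := Finset.subset_union_left

lemma tssStep_mono {A B : Finset V} (h : A ⊆ B) : tssStep G τ A ⊆ tssStep G τ B := by
  unfold tssStep
  apply Finset.union_subset_union h
  intro v hv
  rw [Finset.mem_filter] at hv ⊢
  refine ⟨hv.1, le_trans hv.2 ?_⟩
  exact Finset.card_le_card (Finset.filter_subset_filter _ h)

lemma tssStep_iter_mono {A B : Finset V} (h : A ⊆ B) (n : ℕ) :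
    (tssStep G τ)^[n] A ⊆ (tssStep G τ)^[n] B := by
  induction n generalizing A B with
  | zero => exact h
  | succ n ih =>
    rw [Function.iterate_succ_apply, Function.iterate_succ_apply]
    exact ih (tssStep_mono G τ h)

lemma tss_target_mono {A B : Finset V} (h : A ⊆ B) (hA : tssIsTargetSet G τ A) :
    tssIsTargetSet G τ B := by
  obtain ⟨n, hn⟩ := hA
  refine ⟨n, Finset.univ_subset_iff.mp ?_⟩
  rw [← hn]
  exact tssStep_iter_mono G τ h n

lemma exists_ord : ∀ (n : ℕ) (S : Finset V), Sᶜ.card = n → tssIsTargetSet G τ S →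
    ∃ ord : List V, ord.Nodup ∧ ord.toFinset = Sᶜ ∧
      ∀ P v Q, ord = P ++ v :: Q →
        τ v ≤ ((S ∪ P.toFinset).filter (fun u => G.Adj v u)).card := by
  intro n
  induction n with
  | zero =>
    intro S hcard _
    refine ⟨[], List.nodup_nil, ?_, ?_⟩
    · simp [(Finset.card_eq_zero.mp hcard)]
    · intro P v Q h; exact absurd h (by simp)
  | succ n ih =>
    intro S hcard hS
    have hne : S ≠ Finset.univ := by
      intro h
      rw [h, Finset.compl_univ, Finset.card_empty] at hcard
      exact Nat.succ_ne_zero n hcard.symm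
    have hsub : S ⊆ tssStep G τ S := tssStep_subset G τ S
    have hstep : tssStep G τ S ≠ S := by
      intro h
      obtain ⟨k, hk⟩ := hS
      have hfix : (tssStep G τ)^[k] S = S := Function.iterate_fixed h k
      exact hne (by rw [← hk, hfix])
    obtain ⟨v, hv1, hv2⟩ : ∃ v, v ∈ tssStep G τ S ∧ v ∉ S := by
      by_contra h
      push_neg at h
      exact hstep (Finset.Subset.antisymm (fun x hx => h x hx) hsub)
    have hτv : τ v ≤ (S.filter (fun u => G.Adj v u)).card := by
      rcases Finset.mem_union.mp hv1 with h | h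
      · exact absurd h hv2
      · exact (Finset.mem_filter.mp h).2
    have hS' : tssIsTargetSet G τ (insert v S) :=
      tss_target_mono G τ (Finset.subset_insert v S) hS
    have hvc : v ∈ Sᶜ := Finset.mem_compl.mpr hv2
    have hcard' : (insert v S)ᶜ.card = n := by
      rw [Finset.compl_insert, Finset.card_erase_of_mem hvc, hcard]
      rfl
    obtain ⟨ord, hnd, htf, hp⟩ := ih (insert v S) hcard' hS'
    have hvord : v ∉ ord := by
      intro hv
      have h2 : v ∈ (insert v S)ᶜ := htf ▸ List.mem_toFinset.mpr hv
      rw [Finset.mem_compl] at h2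
      exact h2 (Finset.mem_insert_self v S)
    refine ⟨v :: ord, List.nodup_cons.mpr ⟨hvord, hnd⟩, ?_, ?_⟩
    · rw [List.toFinset_cons, htf, Finset.compl_insert, Finset.insert_erase hvc]
    · intro P w Q h
      match P, h with
      | [], h =>
        have h1 : v = w := by injection h
        subst h1
        simpa using hτv
      | p :: P', h =>
        have hp1 : v = p := by injection h
        have h2 : ord = P' ++ w :: Q := by injection h
        have h3 := hp P' w Q h2
        rw [← hp1, List.toFinset_cons, Finset.union_insert]
        rw [Finset.insert_union] at h3
        exact h3

end AuxTss

section ConsFacts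

variable (G : SimpleGraph V) [DecidableRel G.Adj] (N : ℕ)

/-- `v_i` as a vertex of the construction. -/
def cvi (v : V) : (V ⊕ V ⊕ V) ⊕ G.Dart := Sum.inl (Sum.inl v)

/-- `v_c` as a vertex of the construction. -/
def cvc (v : V) : (V ⊕ V ⊕ V) ⊕ G.Dart := Sum.inl (Sum.inr (Sum.inl v))

/-- `v_o` as a vertex of the construction. -/
def cvo (v : V) : (V ⊕ V ⊕ V) ⊕ G.Dart := Sum.inl (Sum.inr (Sum.inr v))

/-- `p_{uv}` as a vertex of the construction. -/
def cpd (d : G.Dart) : (V ⊕ V ⊕ V) ⊕ G.Dart := Sum.inr d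

lemma consAux_self (a : (V ⊕ V ⊕ V) ⊕ G.Dart) : consAux G N a a = 0 := by
  rcases a with ((v | (v | v)) | d) <;> rfl

lemma consM_self (a : (V ⊕ V ⊕ V) ⊕ G.Dart) : consM G N a a = 0 := by
  unfold consM
  rw [consAux_self]

lemma consM_comm (a b : (V ⊕ V ⊕ V) ⊕ G.Dart) : consM G N a b = consM G N b a :=
  Nat.add_comm _ _

lemma dart_snd_fiber_card (v : V) :
    (Finset.univ.filter (fun d : G.Dart => d.toProd.2 = v)).card = G.degree v := by
  rw [← SimpleGraph.dart_fst_fiber_card_eq_degree G v]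
  apply Finset.card_bij (fun d _ => d.symm)
  · intro d hd
    simp only [Finset.mem_filter, Finset.mem_univ, true_and] at hd ⊢
    exact hd
  · intro d1 h1 d2 h2 he
    have := congrArg SimpleGraph.Dart.symm he
    rwa [SimpleGraph.Dart.symm_symm, SimpleGraph.Dart.symm_symm] at this
  · intro d hd
    simp only [Finset.mem_filter, Finset.mem_univ, true_and] at hd ⊢
    exact ⟨d.symm, hd, d.symm_symm⟩

lemma deg_cvi (v : V) : mgDeg (consM G N) (cvi G v) = N + G.degree v := by
  unfold mgDeg
  rw [Fintype.sum_sum_type, Fintype.sum_sum_type, Fintype.sum_sum_type]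
  have h1 : ∑ w : V, consM G N (cvi G v) (Sum.inl (Sum.inl w)) = 0 :=
    Finset.sum_eq_zero (fun w _ => rfl)
  have h2 : ∑ w : V, consM G N (cvi G v) (Sum.inl (Sum.inr (Sum.inl w))) = N := by
    have : ∀ w : V, consM G N (cvi G v) (Sum.inl (Sum.inr (Sum.inl w)))
        = if v = w then N else 0 := fun w => rfl
    rw [Finset.sum_congr rfl (fun w _ => this w), Finset.sum_ite_eq]
    simp
  have h3 : ∑ w : V, consM G N (cvi G v) (Sum.inl (Sum.inr (Sum.inr w))) = 0 :=
    Finset.sum_eq_zero (fun w _ => rfl)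
  have h4 : ∑ d : G.Dart, consM G N (cvi G v) (Sum.inr d) = G.degree v := by
    have hv : ∀ d : G.Dart, consM G N (cvi G v) (Sum.inr d)
        = if d.toProd.2 = v then 1 else 0 := by
      intro d
      have : consM G N (cvi G v) (Sum.inr d)
          = 0 + (if d.toProd.2 = v then 1 else 0) := rfl
      rw [this, Nat.zero_add]
    rw [Finset.sum_congr rfl (fun d _ => hv d), Finset.sum_boole]
    rw [Nat.cast_id, dart_snd_fiber_card]
  rw [h1, h2, h3, h4]
  omega

lemma dart_fst_fiber_card (v : V) :
    (Finset.univ.filter (fun d : G.Dart => d.toProd.1 = v)).card = G.degree v :=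
  SimpleGraph.dart_fst_fiber_card_eq_degree G v

lemma deg_cvc (v : V) : mgDeg (consM G N) (cvc G v) = N + 1 := by
  unfold mgDeg
  rw [Fintype.sum_sum_type, Fintype.sum_sum_type, Fintype.sum_sum_type]
  have h1 : ∑ w : V, consM G N (cvc G v) (Sum.inl (Sum.inl w)) = N := by
    have hv : ∀ w : V, consM G N (cvc G v) (Sum.inl (Sum.inl w))
        = if w = v then N else 0 := by
      intro w
      have : consM G N (cvc G v) (Sum.inl (Sum.inl w))
          = 0 + (if w = v then N else 0) := rfl
      rw [this, Nat.zero_add]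
    rw [Finset.sum_congr rfl (fun w _ => hv w), Finset.sum_ite_eq']
    simp
  have h2 : ∑ w : V, consM G N (cvc G v) (Sum.inl (Sum.inr (Sum.inl w))) = 0 :=
    Finset.sum_eq_zero (fun w _ => rfl)
  have h3 : ∑ w : V, consM G N (cvc G v) (Sum.inl (Sum.inr (Sum.inr w))) = 1 := by
    have hv : ∀ w : V, consM G N (cvc G v) (Sum.inl (Sum.inr (Sum.inr w)))
        = if v = w then 1 else 0 := fun w => rfl
    rw [Finset.sum_congr rfl (fun w _ => hv w), Finset.sum_ite_eq]
    simp
  have h4 : ∑ d : G.Dart, consM G N (cvc G v) (Sum.inr d) = 0 :=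
    Finset.sum_eq_zero (fun d _ => rfl)
  rw [h1, h2, h3, h4]

lemma deg_cvo (v : V) : mgDeg (consM G N) (cvo G v) = 1 + N * G.degree v := by
  unfold mgDeg
  rw [Fintype.sum_sum_type, Fintype.sum_sum_type, Fintype.sum_sum_type]
  have h1 : ∑ w : V, consM G N (cvo G v) (Sum.inl (Sum.inl w)) = 0 :=
    Finset.sum_eq_zero (fun w _ => rfl)
  have h2 : ∑ w : V, consM G N (cvo G v) (Sum.inl (Sum.inr (Sum.inl w))) = 1 := by
    have hv : ∀ w : V, consM G N (cvo G v) (Sum.inl (Sum.inr (Sum.inl w)))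
        = if w = v then 1 else 0 := by
      intro w
      have : consM G N (cvo G v) (Sum.inl (Sum.inr (Sum.inl w)))
          = 0 + (if w = v then 1 else 0) := rfl
      rw [this, Nat.zero_add]
    rw [Finset.sum_congr rfl (fun w _ => hv w), Finset.sum_ite_eq']
    simp
  have h3 : ∑ w : V, consM G N (cvo G v) (Sum.inl (Sum.inr (Sum.inr w))) = 0 :=
    Finset.sum_eq_zero (fun w _ => rfl)
  have h4 : ∑ d : G.Dart, consM G N (cvo G v) (Sum.inr d) = N * G.degree v := by
    have hv : ∀ d : G.Dart, consM G N (cvo G v) (Sum.inr d)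
        = if d.toProd.1 = v then N else 0 := fun d => rfl
    rw [Finset.sum_congr rfl (fun d _ => hv d), ← Finset.sum_filter,
      Finset.sum_const, smul_eq_mul, dart_fst_fiber_card, Nat.mul_comm]
  rw [h1, h2, h3, h4]
  omega

lemma deg_cpd (d : G.Dart) : mgDeg (consM G N) (cpd G d) = N + 1 := by
  unfold mgDeg
  rw [Fintype.sum_sum_type, Fintype.sum_sum_type, Fintype.sum_sum_type]
  have h1 : ∑ w : V, consM G N (cpd G d) (Sum.inl (Sum.inl w)) = 1 := by
    have hv : ∀ w : V, consM G N (cpd G d) (Sum.inl (Sum.inl w))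
        = if d.toProd.2 = w then 1 else 0 := fun w => rfl
    rw [Finset.sum_congr rfl (fun w _ => hv w), Finset.sum_ite_eq]
    simp
  have h2 : ∑ w : V, consM G N (cpd G d) (Sum.inl (Sum.inr (Sum.inl w))) = 0 :=
    Finset.sum_eq_zero (fun w _ => rfl)
  have h3 : ∑ w : V, consM G N (cpd G d) (Sum.inl (Sum.inr (Sum.inr w))) = N := by
    have hv : ∀ w : V, consM G N (cpd G d) (Sum.inl (Sum.inr (Sum.inr w)))
        = if d.toProd.1 = w then N else 0 := by
      intro w
      have : consM G N (cpd G d) (Sum.inl (Sum.inr (Sum.inr w)))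
          = 0 + (if d.toProd.1 = w then N else 0) := rfl
      rw [this, Nat.zero_add]
    rw [Finset.sum_congr rfl (fun w _ => hv w), Finset.sum_ite_eq]
    simp
  have h4 : ∑ e : G.Dart, consM G N (cpd G d) (Sum.inr e) = 0 :=
    Finset.sum_eq_zero (fun e _ => rfl)
  rw [h1, h2, h3, h4]
  omega

/-- The list of `p_{vu}` vertices for a fixed `v`. -/
noncomputable def cpb (v : V) : List ((V ⊕ V ⊕ V) ⊕ G.Dart) :=
  ((Finset.univ.filter (fun d : G.Dart => d.toProd.1 = v)).toList).map Sum.inr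

/-- The firing block of a seed vertex at the start of the game. -/
noncomputable def cblkA (v : V) : List ((V ⊕ V ⊕ V) ⊕ G.Dart) := cvo G v :: cpb G v

/-- The firing block of a non-seed vertex. -/
noncomputable def cblkB (v : V) : List ((V ⊕ V ⊕ V) ⊕ G.Dart) :=
  cvi G v :: cvc G v :: cvo G v :: cpb G v

/-- The firing block of a seed vertex at the end of the game. -/
noncomputable def cblkC (v : V) : List ((V ⊕ V ⊕ V) ⊕ G.Dart) := [cvi G v, cvc G v]

/-- The full legal game witnessing recurrence. -/
noncomputable def cbigL (S : Finset V) (ord : List V) : List ((V ⊕ V ⊕ V) ⊕ G.Dart) :=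
  S.toList.flatMap (cblkA G) ++ ord.flatMap (cblkB G) ++ S.toList.flatMap (cblkC G)

/-- The vertex of `G` to which a vertex of the construction belongs. -/
def ctag : (V ⊕ V ⊕ V) ⊕ G.Dart → V
  | Sum.inl (Sum.inl v) => v
  | Sum.inl (Sum.inr (Sum.inl v)) => v
  | Sum.inl (Sum.inr (Sum.inr v)) => v
  | Sum.inr d => d.toProd.1

/-- Whether a vertex of the construction is of the form `v_i` or `v_c`. -/
def cic : (V ⊕ V ⊕ V) ⊕ G.Dart → Bool
  | Sum.inl (Sum.inl _) => true
  | Sum.inl (Sum.inr (Sum.inl _)) => true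
  | _ => false

lemma mem_cpb {v : V} {x : (V ⊕ V ⊕ V) ⊕ G.Dart} :
    x ∈ cpb G v ↔ ∃ d : G.Dart, d.toProd.1 = v ∧ Sum.inr d = x := by
  simp [cpb, Finset.mem_toList]

lemma nodup_cpb (v : V) : (cpb G v).Nodup :=
  List.Nodup.map (fun _ _ h => Sum.inr.inj h) (Finset.nodup_toList _)

lemma nodup_cblkA (v : V) : (cblkA G v).Nodup := by
  rw [cblkA, List.nodup_cons]
  refine ⟨?_, nodup_cpb G v⟩
  rw [mem_cpb]
  rintro ⟨d, _, h⟩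
  exact absurd h (by simp [cvo])

lemma nodup_cblkB (v : V) : (cblkB G v).Nodup := by
  rw [cblkB, List.nodup_cons, List.nodup_cons]
  refine ⟨?_, ?_, nodup_cblkA G v⟩
  · intro h
    rcases List.mem_cons.mp h with h | h
    · exact absurd h (by simp [cvi, cvc])
    · rcases List.mem_cons.mp h with h | h
      · exact absurd h (by simp [cvi, cvo])
      · obtain ⟨d, _, hd⟩ := (mem_cpb G).mp h
        exact absurd hd (by simp [cvi])
  · intro h
    rcases List.mem_cons.mp h with h | h
    · exact absurd h (by simp [cvc, cvo])
    · obtain ⟨d, _, hd⟩ := (mem_cpb G).mp h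
      exact absurd hd (by simp [cvc])

lemma nodup_cblkC (v : V) : (cblkC G v).Nodup := by
  simp [cblkC, cvi, cvc]

lemma ctag_cblkA {v : V} {x} (h : x ∈ cblkA G v) : ctag G x = v := by
  rcases List.mem_cons.mp h with h | h
  · subst h; rfl
  · obtain ⟨d, hd, h2⟩ := (mem_cpb G).mp h
    rw [← h2]; exact hd

lemma ctag_cblkB {v : V} {x} (h : x ∈ cblkB G v) : ctag G x = v := by
  rcases List.mem_cons.mp h with h | h
  · subst h; rfl
  · rcases List.mem_cons.mp h with h | h
    · subst h; rfl
    · exact ctag_cblkA G h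

lemma ctag_cblkC {v : V} {x} (h : x ∈ cblkC G v) : ctag G x = v := by
  rcases List.mem_cons.mp h with h | h
  · subst h; rfl
  · rcases List.mem_cons.mp h with h | h
    · subst h; rfl
    · exact absurd h List.not_mem_nil

lemma cic_cblkA {v : V} {x} (h : x ∈ cblkA G v) : cic G x = false := by
  rcases List.mem_cons.mp h with h | h
  · subst h; rfl
  · obtain ⟨d, _, h2⟩ := (mem_cpb G).mp h
    rw [← h2]; rfl

lemma cic_cblkC {v : V} {x} (h : x ∈ cblkC G v) : cic G x = true := by
  rcases List.mem_cons.mp h with h | h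
  · subst h; rfl
  · rcases List.mem_cons.mp h with h | h
    · subst h; rfl
    · exact absurd h List.not_mem_nil

lemma nodup_flatMap_blk (l : List V) (hl : l.Nodup)
    (blk : V → List ((V ⊕ V ⊕ V) ⊕ G.Dart))
    (hn : ∀ v, (blk v).Nodup) (ht : ∀ v x, x ∈ blk v → ctag G x = v) :
    (l.flatMap blk).Nodup := by
  rw [List.nodup_flatMap]
  refine ⟨fun v _ => hn v, ?_⟩
  refine List.Pairwise.imp ?_ hl
  intro a b hab x hxa hxb
  exact hab ((ht a x hxa).symm.trans (ht b x hxb))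

lemma nodup_cbigL (S : Finset V) (ord : List V) (hord : ord.Nodup)
    (htf : ord.toFinset = Sᶜ) : (cbigL G S ord).Nodup := by
  have hA : (S.toList.flatMap (cblkA G)).Nodup :=
    nodup_flatMap_blk G _ (Finset.nodup_toList S) _ (nodup_cblkA G)
      (fun v x h => ctag_cblkA G h)
  have hB : (ord.flatMap (cblkB G)).Nodup :=
    nodup_flatMap_blk G _ hord _ (nodup_cblkB G) (fun v x h => ctag_cblkB G h)
  have hC : (S.toList.flatMap (cblkC G)).Nodup :=
    nodup_flatMap_blk G _ (Finset.nodup_toList S) _ (nodup_cblkC G)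
      (fun v x h => ctag_cblkC G h)
  have htagA : ∀ x ∈ S.toList.flatMap (cblkA G), ctag G x ∈ S := by
    intro x hx
    obtain ⟨v, hv, hxv⟩ := List.mem_flatMap.mp hx
    rw [ctag_cblkA G hxv]
    exact Finset.mem_toList.mp hv
  have htagC : ∀ x ∈ S.toList.flatMap (cblkC G), ctag G x ∈ S := by
    intro x hx
    obtain ⟨v, hv, hxv⟩ := List.mem_flatMap.mp hx
    rw [ctag_cblkC G hxv]
    exact Finset.mem_toList.mp hv
  have htagB : ∀ x ∈ ord.flatMap (cblkB G), ctag G x ∉ S := by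
    intro x hx
    obtain ⟨v, hv, hxv⟩ := List.mem_flatMap.mp hx
    rw [ctag_cblkB G hxv]
    have : v ∈ Sᶜ := htf ▸ List.mem_toFinset.mpr hv
    exact Finset.mem_compl.mp this
  rw [cbigL, List.nodup_append, List.nodup_append]
  refine ⟨⟨hA, hB, ?_⟩, hC, ?_⟩
  · intro x hxA y hxB hxy
    subst hxy
    exact htagB x hxB (htagA x hxA)
  · intro x hx12 y hxC hxy
    subst hxy
    rcases List.mem_append.mp hx12 with hx | hx
    · have h1 := cic_cblkA G (List.mem_flatMap.mp hx).choose_spec.2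
      have h2 := cic_cblkC G (List.mem_flatMap.mp hxC).choose_spec.2
      rw [h1] at h2
      exact Bool.false_ne_true h2
    · exact htagB x hx (htagC x hxC)

lemma mem_cbigL (S : Finset V) (ord : List V) (htf : ord.toFinset = Sᶜ)
    (x : (V ⊕ V ⊕ V) ⊕ G.Dart) : x ∈ cbigL G S ord := by
  have hmemord : ∀ v : V, v ∉ S → v ∈ ord := by
    intro v hv
    have : v ∈ Sᶜ := Finset.mem_compl.mpr hv
    rw [← htf] at this
    exact List.mem_toFinset.mp this
  have hBmem : ∀ v : V, v ∉ S → ∀ y ∈ cblkB G v, y ∈ cbigL G S ord := by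
    intro v hv y hy
    rw [cbigL]
    refine List.mem_append_left _ (List.mem_append_right _ ?_)
    exact List.mem_flatMap.mpr ⟨v, hmemord v hv, hy⟩
  have hAmem : ∀ v : V, v ∈ S → ∀ y ∈ cblkA G v, y ∈ cbigL G S ord := by
    intro v hv y hy
    rw [cbigL]
    refine List.mem_append_left _ (List.mem_append_left _ ?_)
    exact List.mem_flatMap.mpr ⟨v, Finset.mem_toList.mpr hv, hy⟩
  have hCmem : ∀ v : V, v ∈ S → ∀ y ∈ cblkC G v, y ∈ cbigL G S ord := by
    intro v hv y hy
    rw [cbigL]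
    exact List.mem_append_right _ (List.mem_flatMap.mpr ⟨v, Finset.mem_toList.mpr hv, hy⟩)
  rcases x with ((v | (v | v)) | d)
  · by_cases hv : v ∈ S
    · exact hCmem v hv _ (by simp [cblkC, cvi])
    · exact hBmem v hv _ (by simp [cblkB, cvi])
  · by_cases hv : v ∈ S
    · exact hCmem v hv _ (by simp [cblkC, cvc])
    · exact hBmem v hv _ (by simp [cblkB, cvc])
  · by_cases hv : v ∈ S
    · exact hAmem v hv _ (by simp [cblkA, cvo])
    · exact hBmem v hv _ (by simp [cblkB, cblkA, cvo])
  · have hd : Sum.inr d ∈ cpb G d.toProd.1 := (mem_cpb G).mpr ⟨d, rfl, rfl⟩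
    by_cases hv : d.toProd.1 ∈ S
    · exact hAmem _ hv _ (by rw [cblkA]; exact List.mem_cons_of_mem _ hd)
    · refine hBmem _ hv _ ?_
      rw [cblkB]
      exact List.mem_cons_of_mem _ (List.mem_cons_of_mem _ (List.mem_cons_of_mem _ hd))

lemma pair_sublist_flatMap {l : List V} {blk : V → List ((V ⊕ V ⊕ V) ⊕ G.Dart)}
    {v : V} (hv : v ∈ l) {s : List ((V ⊕ V ⊕ V) ⊕ G.Dart)}
    (hs : List.Sublist s (blk v)) : List.Sublist s (l.flatMap blk) := by
  obtain ⟨P, Q, hl⟩ := List.append_of_mem hv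
  rw [hl, List.flatMap_append, List.flatMap_cons]
  exact hs.trans ((List.sublist_append_left _ _).trans (List.sublist_append_right _ _))

lemma dart_count_bound {v : V} (B : Finset V) (hB : ∀ u ∈ B, G.Adj v u)
    (P : List ((V ⊕ V ⊕ V) ⊕ G.Dart)) (hndP : P.Nodup)
    (hP : ∀ d : G.Dart, d.toProd.2 = v → d.toProd.1 ∈ B → Sum.inr d ∈ P) :
    (B.card : ℤ) ≤ (P.map (fun u => (consM G N u (cvi G v) : ℤ))).sum := by
  classical
  set D : Finset G.Dart :=
    Finset.univ.filter (fun d => d.toProd.2 = v ∧ d.toProd.1 ∈ B) with hD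
  have hcard : D.card = B.card := by
    apply Finset.card_bij (fun d _ => d.toProd.1)
    · intro d hd
      exact ((Finset.mem_filter.mp hd).2).2
    · intro d1 h1 d2 h2 he
      have e1 := (Finset.mem_filter.mp h1).2.1
      have e2 := (Finset.mem_filter.mp h2).2.1
      exact SimpleGraph.Dart.toProd_injective (Prod.ext he (e1.trans e2.symm))
    · intro u hu
      refine ⟨SimpleGraph.Dart.mk (u, v) ((hB u hu).symm), ?_, rfl⟩
      rw [hD, Finset.mem_filter]
      exact ⟨Finset.mem_univ _, rfl, hu⟩
  have hval : ∀ d ∈ D, (consM G N (Sum.inr d) (cvi G v) : ℤ) = 1 := by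
    intro d hd
    have h2 : d.toProd.2 = v := (Finset.mem_filter.mp hd).2.1
    have : consM G N (Sum.inr d) (cvi G v) = if d.toProd.2 = v then 1 else 0 := rfl
    rw [this, if_pos h2]
    rfl
  have hTsub : ∀ t ∈ D.image Sum.inr, t ∈ P := by
    intro t ht
    obtain ⟨d, hd, rfl⟩ := Finset.mem_image.mp ht
    have hmem := Finset.mem_filter.mp hd
    exact hP d hmem.2.1 hmem.2.2
  have hle := sum_finset_le_list_sum P hndP (fun u => (consM G N u (cvi G v) : ℤ))
    (fun u => Int.natCast_nonneg _) (D.image Sum.inr) hTsub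
  have hsum : ∑ t ∈ D.image Sum.inr, (consM G N t (cvi G v) : ℤ) = (B.card : ℤ) := by
    rw [Finset.sum_image (fun a _ b _ h => Sum.inr.inj h)]
    rw [Finset.sum_congr rfl hval, Finset.sum_const, hcard]
    simp
  rw [← hsum]
  exact hle

/-- The effective divisor added to `x`: one chip on `v_o` for every seed `v ∈ S`. -/
def consG (S : Finset V) : (V ⊕ V ⊕ V) ⊕ G.Dart → ℤ
  | Sum.inl (Sum.inr (Sum.inr v)) => if v ∈ S then 1 else 0
  | _ => 0

lemma consG_effective (S : Finset V) : mgEffective (consG G S) := by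
  intro w
  rcases w with ((v | (v | v)) | d)
  · exact le_refl 0
  · exact le_refl 0
  · show (0:ℤ) ≤ if v ∈ S then 1 else 0
    split <;> omega
  · exact le_refl 0

lemma consG_degDiv (S : Finset V) : mgDegDiv (consG G S) = (S.card : ℤ) := by
  unfold mgDegDiv
  rw [Fintype.sum_sum_type, Fintype.sum_sum_type, Fintype.sum_sum_type]
  have h1 : ∑ w : V, consG G S (Sum.inl (Sum.inl w)) = 0 :=
    Finset.sum_eq_zero (fun w _ => rfl)
  have h2 : ∑ w : V, consG G S (Sum.inl (Sum.inr (Sum.inl w))) = 0 :=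
    Finset.sum_eq_zero (fun w _ => rfl)
  have h4 : ∑ d : G.Dart, consG G S (Sum.inr d) = 0 :=
    Finset.sum_eq_zero (fun d _ => rfl)
  have h3 : ∑ w : V, consG G S (Sum.inl (Sum.inr (Sum.inr w))) = (S.card : ℤ) := by
    have hv : ∀ w : V, consG G S (Sum.inl (Sum.inr (Sum.inr w)))
        = if w ∈ S then 1 else 0 := fun w => rfl
    rw [Finset.sum_congr rfl (fun w _ => hv w), Finset.sum_boole]
    congr 1
    rw [Finset.filter_mem_eq_inter, Finset.univ_inter]
  rw [h1, h2, h3, h4]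
  ring

lemma cons_recurrent [Nonempty V] (τ : V → ℕ) (hτ : ∀ v, τ v ≤ G.degree v)
    (S : Finset V) (ord : List V)
    (hordnd : ord.Nodup) (hordtf : ord.toFinset = Sᶜ)
    (hordprop : ∀ P v Q, ord = P ++ v :: Q →
      τ v ≤ ((S ∪ P.toFinset).filter (fun u => G.Adj v u)).card) :
    mgRecurrent (consM G N) (consX G τ N + consG G S) := by
  classical
  set f : ((V ⊕ V ⊕ V) ⊕ G.Dart) → ℤ := consX G τ N + consG G S with hfdef
  set L : List ((V ⊕ V ⊕ V) ⊕ G.Dart) := cbigL G S ord with hLdef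
  set LA := S.toList.flatMap (cblkA G) with hLA
  set LB := ord.flatMap (cblkB G) with hLB
  set LC := S.toList.flatMap (cblkC G) with hLC
  have hnd : L.Nodup := by rw [hLdef]; exact nodup_cbigL G S ord hordnd hordtf
  have hmemL : ∀ x, x ∈ L := by rw [hLdef]; exact mem_cbigL G S ord hordtf
  have hmemord : ∀ v : V, v ∉ S → v ∈ ord := by
    intro v hv
    have h2 : v ∈ Sᶜ := Finset.mem_compl.mpr hv
    rw [← hordtf] at h2
    exact List.mem_toFinset.mp h2
  have hLsplit : L = (LA ++ LB) ++ LC := by rw [hLdef, hLA, hLB, hLC]; rfl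
  have hsubAB : List.Sublist (LA ++ LB) L := by
    rw [hLsplit]; exact List.sublist_append_left _ _
  have hsubC : List.Sublist LC L := by
    rw [hLsplit]; exact List.sublist_append_right _ _
  have hsubB : List.Sublist LB L := (List.sublist_append_right LA LB).trans hsubAB
  have hsubA : List.Sublist LA L := (List.sublist_append_left LA LB).trans hsubAB
  have hfvi : ∀ v, f (cvi G v) = (G.degree v : ℤ) + N - τ v := by
    intro v
    rw [hfdef]
    show consX G τ N (cvi G v) + consG G S (cvi G v) = _
    rw [show consG G S (cvi G v) = 0 from rfl, add_zero]
    rfl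
  have hfvc : ∀ v, f (cvc G v) = 1 := by
    intro v
    rw [hfdef]
    show consX G τ N (cvc G v) + consG G S (cvc G v) = _
    rfl
  have hfpd : ∀ d : G.Dart, f (cpd G d) = 1 := by
    intro d
    rw [hfdef]
    show consX G τ N (cpd G d) + consG G S (cpd G d) = _
    rfl
  have hfvo : ∀ v, f (cvo G v) = (N : ℤ) * G.degree v + (if v ∈ S then 1 else 0) := by
    intro v
    rw [hfdef]
    show consX G τ N (cvo G v) + consG G S (cvo G v) = _
    rfl
  have hviB : ∀ v, cvi G v ∈ cblkB G v := fun v => List.mem_cons_self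
  have hviC : ∀ v, cvi G v ∈ cblkC G v := fun v => List.mem_cons_self
  have hpdmem : ∀ d : G.Dart, Sum.inr d ∈ cpb G d.toProd.1 :=
    fun d => (mem_cpb G).mpr ⟨d, rfl, rfl⟩
  have hpdA : ∀ d : G.Dart, d.toProd.1 ∈ S → Sum.inr d ∈ LA := by
    intro d hd
    rw [hLA]
    exact List.mem_flatMap.mpr ⟨d.toProd.1, Finset.mem_toList.mpr hd,
      List.mem_cons_of_mem _ (hpdmem d)⟩
  have hlegal : mgLegal (consM G N) f L := by
    apply mgLegal_of_splits f L hnd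
    intro P w Q hPQ
    have hPnd : P.Nodup := by
      have h2 : (P ++ w :: Q).Nodup := hPQ ▸ hnd
      exact h2.of_append_left
    have hprefix : ∀ a, List.Sublist [a, w] L → a ≠ w → a ∈ P := fun a hs haw =>
      mem_prefix_of_pair_sublist hnd hPQ hs haw
    have hmz : ∀ u, (0:ℤ) ≤ (consM G N u w : ℤ) := fun u => Int.natCast_nonneg _
    have hsingle : ∀ a ∈ P, (consM G N a w : ℤ) ≤
        (P.map (fun u => (consM G N u w : ℤ))).sum := by
      intro a ha
      have h2 := sum_finset_le_list_sum P hPnd (fun u => (consM G N u w : ℤ)) hmz {a}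
        (by intro t ht; rw [Finset.mem_singleton] at ht; rw [ht]; exact ha)
      simpa using h2
    rcases w with ((v | (v | v)) | d)
    · -- w = cvi v
      show ((mgDeg (consM G N) (cvi G v) : ℕ) : ℤ) ≤ f (cvi G v) +
        (P.map (fun u => (consM G N u (cvi G v) : ℤ))).sum
      rw [deg_cvi, hfvi]
      have hτdeg : ((τ v : ℕ) : ℤ) ≤ (G.degree v : ℤ) := by exact_mod_cast hτ v
      by_cases hvS : v ∈ S
      · have hviCm : cvi G v ∈ LC := by
          rw [hLC]
          exact List.mem_flatMap.mpr ⟨v, Finset.mem_toList.mpr hvS, hviC v⟩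
        have hdarts : ∀ d : G.Dart, d.toProd.2 = v →
            d.toProd.1 ∈ G.neighborFinset v → Sum.inr d ∈ P := by
          intro d hd2 _
          refine hprefix _ ?_ (by simp [cvi])
          rw [hLsplit]
          by_cases hd1 : d.toProd.1 ∈ S
          · exact pair_sublist_append (List.mem_append_left _ (hpdA d hd1)) hviCm
          · have h2 : Sum.inr d ∈ LB := by
              rw [hLB]
              refine List.mem_flatMap.mpr ⟨d.toProd.1, hmemord _ hd1, ?_⟩
              rw [cblkB]
              exact List.mem_cons_of_mem _ (List.mem_cons_of_mem _
                (List.mem_cons_of_mem _ (hpdmem d)))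
            exact pair_sublist_append (List.mem_append_right _ h2) hviCm
        have hB := dart_count_bound G N (G.neighborFinset v)
          (fun u hu => by rwa [SimpleGraph.mem_neighborFinset] at hu) P hPnd hdarts
        rw [SimpleGraph.card_neighborFinset_eq_degree] at hB
        push_cast
        push_cast at hB
        linarith
      · obtain ⟨P₀, Q₀, hsplit⟩ := List.append_of_mem (hmemord v hvS)
        have hτv := hordprop P₀ v Q₀ hsplit
        have hflatBeq : LB = P₀.flatMap (cblkB G) ++
            (cblkB G v ++ Q₀.flatMap (cblkB G)) := by
          rw [hLB, hsplit, List.flatMap_append, List.flatMap_cons]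
        have hviBm : cvi G v ∈ cblkB G v ++ Q₀.flatMap (cblkB G) :=
          List.mem_append_left _ (hviB v)
        have hdarts : ∀ d : G.Dart, d.toProd.2 = v →
            d.toProd.1 ∈ ((S ∪ P₀.toFinset).filter (fun u => G.Adj v u)) →
            Sum.inr d ∈ P := by
          intro d hd2 hd1B
          obtain ⟨hmemU, _⟩ := Finset.mem_filter.mp hd1B
          refine hprefix _ ?_ (by simp [cvi])
          rcases Finset.mem_union.mp hmemU with hu | hu
          · have h3 : cvi G v ∈ LB := by
              rw [hLB]
              exact List.mem_flatMap.mpr ⟨v, hmemord v hvS, hviB v⟩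
            exact (pair_sublist_append (hpdA d hu) h3).trans hsubAB
          · have hu' : d.toProd.1 ∈ P₀ := List.mem_toFinset.mp hu
            have h2 : Sum.inr d ∈ P₀.flatMap (cblkB G) := by
              refine List.mem_flatMap.mpr ⟨d.toProd.1, hu', ?_⟩
              rw [cblkB]
              exact List.mem_cons_of_mem _ (List.mem_cons_of_mem _
                (List.mem_cons_of_mem _ (hpdmem d)))
            have h4 := pair_sublist_append h2 hviBm
            rw [← hflatBeq] at h4
            exact h4.trans hsubB
        have hBadj : ∀ u ∈ ((S ∪ P₀.toFinset).filter (fun u => G.Adj v u)), G.Adj v u :=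
          fun u hu => (Finset.mem_filter.mp hu).2
        have hB := dart_count_bound G N _ hBadj P hPnd hdarts
        have hτB : ((τ v : ℕ) : ℤ) ≤
            ((((S ∪ P₀.toFinset).filter (fun u => G.Adj v u)).card : ℕ) : ℤ) := by
          exact_mod_cast hτv
        push_cast
        push_cast at hB hτB
        linarith
    · -- w = cvc v
      show ((mgDeg (consM G N) (cvc G v) : ℕ) : ℤ) ≤ f (cvc G v) +
        (P.map (fun u => (consM G N u (cvc G v) : ℤ))).sum
      rw [deg_cvc, hfvc]
      have hvimem : cvi G v ∈ P := by
        refine hprefix _ ?_ (by simp [cvi, cvc])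
        by_cases hvS : v ∈ S
        · exact (pair_sublist_flatMap G (Finset.mem_toList.mpr hvS)
            (List.Sublist.refl (cblkC G v))).trans hsubC
        · have hs : List.Sublist [cvi G v, cvc G v] (cblkB G v) :=
            ((List.nil_sublist _).cons₂ _).cons₂ _
          exact (pair_sublist_flatMap G (hmemord v hvS) hs).trans hsubB
      have hval : (consM G N (cvi G v) (cvc G v) : ℤ) = (N : ℤ) := by
        have h3 : consM G N (cvi G v) (cvc G v) = if v = v then N else 0 := rfl
        rw [h3, if_pos rfl]
      have h2 : (consM G N (cvi G v) (cvc G v) : ℤ) ≤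
          (P.map (fun u => (consM G N u (cvc G v) : ℤ))).sum := hsingle _ hvimem
      rw [hval] at h2
      push_cast
      linarith
    · -- w = cvo v
      show ((mgDeg (consM G N) (cvo G v) : ℕ) : ℤ) ≤ f (cvo G v) +
        (P.map (fun u => (consM G N u (cvo G v) : ℤ))).sum
      rw [deg_cvo, hfvo]
      by_cases hvS : v ∈ S
      · rw [if_pos hvS]
        have hnn : (0:ℤ) ≤ (P.map (fun u => (consM G N u (cvo G v) : ℤ))).sum := by
          apply List.sum_nonneg
          intro x hx
          obtain ⟨u, _, rfl⟩ := List.mem_map.mp hx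
          exact Int.natCast_nonneg _
        push_cast
        linarith
      · rw [if_neg hvS]
        have hvcmem : cvc G v ∈ P := by
          refine hprefix _ ?_ (by simp [cvc, cvo])
          have hs : List.Sublist [cvc G v, cvo G v] (cblkB G v) :=
            (((List.nil_sublist _).cons₂ _).cons₂ _).cons _
          exact (pair_sublist_flatMap G (hmemord v hvS) hs).trans hsubB
        have hval : (consM G N (cvc G v) (cvo G v) : ℤ) = 1 := by
          have h3 : consM G N (cvc G v) (cvo G v) = if v = v then 1 else 0 := rfl
          rw [h3, if_pos rfl]
          rfl
        have h2 : (consM G N (cvc G v) (cvo G v) : ℤ) ≤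
            (P.map (fun u => (consM G N u (cvo G v) : ℤ))).sum := hsingle _ hvcmem
        rw [hval] at h2
        push_cast
        linarith
    · -- w = cpd d
      show ((mgDeg (consM G N) (cpd G d) : ℕ) : ℤ) ≤ f (cpd G d) +
        (P.map (fun u => (consM G N u (cpd G d) : ℤ))).sum
      rw [deg_cpd, hfpd]
      have hvomem : cvo G d.toProd.1 ∈ P := by
        refine hprefix _ ?_ (by simp [cvo, cpd])
        by_cases hd1 : d.toProd.1 ∈ S
        · have hs : List.Sublist [cvo G d.toProd.1, Sum.inr d] (cblkA G d.toProd.1) :=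
            (List.singleton_sublist.mpr (hpdmem d)).cons₂ _
          exact (pair_sublist_flatMap G (Finset.mem_toList.mpr hd1) hs).trans hsubA
        · have hs : List.Sublist [cvo G d.toProd.1, Sum.inr d] (cblkB G d.toProd.1) :=
            (((List.singleton_sublist.mpr (hpdmem d)).cons₂ _).cons _).cons _
          exact (pair_sublist_flatMap G (hmemord _ hd1) hs).trans hsubB
      have hval : (consM G N (cvo G d.toProd.1) (cpd G d) : ℤ) = (N : ℤ) := by
        have h3 : consM G N (cvo G d.toProd.1) (cpd G d)
            = if d.toProd.1 = d.toProd.1 then N else 0 := rfl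
        rw [h3, if_pos rfl]
      have h2 : (consM G N (cvo G d.toProd.1) (cpd G d) : ℤ) ≤
          (P.map (fun u => (consM G N u (cpd G d) : ℤ))).sum := hsingle _ hvomem
      rw [hval] at h2
      push_cast
      linarith
  have hplay : mgPlay (consM G N) f L = f := by
    funext x
    rw [mgPlay_formula (consM_self G N)]
    rw [show @List.count _ instBEqOfDecidableEq x L = 1 from @List.count_eq_one_of_mem _ instBEqOfDecidableEq _ _ _ hnd (hmemL x)]
    have hsum : (L.map (fun w => (consM G N w x : ℤ))).sum = (mgDeg (consM G N) x : ℤ) := by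
      rw [← List.sum_toFinset _ hnd]
      have htfL : L.toFinset = Finset.univ :=
        Finset.eq_univ_of_forall (fun w => List.mem_toFinset.mpr (hmemL w))
      rw [htfL]
      unfold mgDeg
      push_cast
      exact Finset.sum_congr rfl (fun u _ => by rw [consM_comm])
    rw [hsum]
    push_cast
    ring
  have hne : L ≠ [] := by
    intro h
    have h2 := hmemL (cvi G (Classical.arbitrary V))
    rw [h] at h2
    exact List.not_mem_nil h2
  exact ⟨L, hne, hlegal, hplay⟩

end ConsFacts

/-- `ts_G(τ) ≥ dist_rec_{G'}(x)` for the standard construction with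
`N = |V| + 2`. -/
theorem stmt8 [Nonempty V] (G : SimpleGraph V) [DecidableRel G.Adj] (τ : V → ℕ)
    (hτ : ∀ v, τ v ≤ G.degree v) :
    mgDistRec (consM G (Fintype.card V + 2)) (consX G τ (Fintype.card V + 2)) ≤
      tssMin G τ := by
  classical
  have hne : {k : ℕ | ∃ S : Finset V, tssIsTargetSet G τ S ∧ S.card = k}.Nonempty :=
    ⟨(Finset.univ : Finset V).card, Finset.univ, ⟨0, rfl⟩, rfl⟩
  obtain ⟨S, hS, hScard⟩ := Nat.sInf_mem hne
  obtain ⟨ord, hordnd, hordtf, hordprop⟩ := exists_ord G τ Sᶜ.card S rfl hS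
  unfold mgDistRec
  apply Nat.sInf_le
  refine ⟨consG G S, consG_effective G S, ?_, ?_⟩
  · rw [consG_degDiv, hScard]
    rfl
  · exact cons_recurrent G (Fintype.card V + 2) τ hτ S ord hordnd hordtf hordprop
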